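/- Let μ = (μ₁, μ₂, μ₃) ∈ ℝ³, let c > 0, and define η₁ = μ₁² − cμ₂²μ₃², η₂ = μ₂² − cμ₁²μ₃², η₃ = μ₃² − cμ₁²μ₂². Let σ ∈ ℝ³ be nonzero. Then there exists t ∈ ℝ with η_iσ_i = tσ_i for i = 1,2,3 if and only if there exists t′ ∈ ℝ with μ_i²σ_i = t′σ_i for i = 1,2,3. -/

import Mathlib

lemma eig_iff_pairwise (f : Fin 3 → ℝ) (σ : Fin 3 → ℝ) (hσ : σ ≠ 0) :
    (∃ t : ℝ, ∀ i, f i * σ i = t * σ i) ↔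
      ∀ i j, σ i ≠ 0 → σ j ≠ 0 → f i = f j := by
  constructor
  · rintro ⟨t, ht⟩ i j hi hj
    have h1 : f i = t := by
      have := ht i; rw [mul_eq_mul_right_iff] at this; rcases this with h | h
      · exact h
      · exact absurd h hi
    have h2 : f j = t := by
      have := ht j; rw [mul_eq_mul_right_iff] at this; rcases this with h | h
      · exact h
      · exact absurd h hj
    rw [h1, h2]
  · intro h
    obtain ⟨i₀, hi₀⟩ : ∃ i, σ i ≠ 0 := by
      by_contra hcon
      push_neg at hcon
      exact hσ (funext fun i => hcon i)
    refine ⟨f i₀, fun i => ?_⟩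
    by_cases hi : σ i = 0
    · simp [hi]
    · rw [h i i₀ hi hi₀]

theorem twisted_skyrmion_iff_harmonic (μ : Fin 3 → ℝ) (c : ℝ) (hc : 0 < c)
    (η : Fin 3 → ℝ)
    (hη : η = ![μ 0 ^ 2 - c * μ 1 ^ 2 * μ 2 ^ 2,
                μ 1 ^ 2 - c * μ 0 ^ 2 * μ 2 ^ 2,
                μ 2 ^ 2 - c * μ 0 ^ 2 * μ 1 ^ 2])
    (σ : Fin 3 → ℝ) (hσ : σ ≠ 0) :
    (∃ t : ℝ, ∀ i, η i * σ i = t * σ i) ↔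
      (∃ t' : ℝ, ∀ i, μ i ^ 2 * σ i = t' * σ i) := by
  rw [eig_iff_pairwise η σ hσ, eig_iff_pairwise (fun i => μ i ^ 2) σ hσ]
  have key : ∀ i j, η i = η j ↔ μ i ^ 2 = μ j ^ 2 := by
    intro i j
    fin_cases i <;> fin_cases j <;>
      simp only [hη, Fin.zero_eta, Fin.mk_one, Fin.reduceFinMk, Matrix.cons_val_zero,
        Matrix.cons_val_one, Matrix.head_cons, Matrix.cons_val_two, Matrix.tail_cons] <;>
      constructor <;> intro h <;>
      nlinarith [sq_nonneg (μ 0), sq_nonneg (μ 1), sq_nonneg (μ 2), hc,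
        mul_nonneg hc.le (sq_nonneg (μ 0)), mul_nonneg hc.le (sq_nonneg (μ 1)),
        mul_nonneg hc.le (sq_nonneg (μ 2))]
  constructor <;> intro h i j hi hj
  · exact (key i j).mp (h i j hi hj)
  · exact (key i j).mpr (h i j hi hj)
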